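/- arXiv:2211.16809 — 7 statements merged into one kernel-verified Lean document; each statement's English description precedes it below -/
import Mathlib

section
/- Let H be a finite group with subgroups X and Y, each isomorphic to C_2^n, such that H is generated by X ∪ Y and H/H' is isomorphic to C_2^{2n} (where H' is the derived subgroup). Then X ∩ Y = 1. -/
open Subgroup Pointwise

private lemma card_pow_aux (n : ℕ) : Nat.card (Fin n → Multiplicative (ZMod 2)) = 2 ^ n := by
  simp [Nat.card_pi, Nat.card_eq_fintype_card]

/-- If `H` is an `n`-dimensional mixed dihedral group relative to `X` and `Y`
(`X ≅ Y ≅ C_2^n`, `H = ⟨X ∪ Y⟩`, `H/H' ≅ C_2^{2n}`), then `X ∩ Y = 1`. -/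
theorem statement0 {H : Type*} [Group H] [Finite H] (n : ℕ) (hn : 1 ≤ n)
    (X Y : Subgroup H)
    (hX : Nonempty (X ≃* (Fin n → Multiplicative (ZMod 2))))
    (hY : Nonempty (Y ≃* (Fin n → Multiplicative (ZMod 2))))
    (hgen : Subgroup.closure ((X : Set H) ∪ (Y : Set H)) = ⊤)
    (hab : Nonempty ((H ⧸ commutator H) ≃* (Fin (2 * n) → Multiplicative (ZMod 2)))) :
    X ⊓ Y = ⊥ := by
  set A := H ⧸ commutator H
  let π : H →* A := QuotientGroup.mk' (commutator H)
  have hπ : Function.Surjective π := QuotientGroup.mk'_surjective _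
  letI : CommGroup A := Abelianization.commGroup H
  set X' := X.map π with hX'def
  set Y' := Y.map π with hY'def
  have cardX : Nat.card X = 2 ^ n := by
    rw [Nat.card_congr hX.some.toEquiv, card_pow_aux]
  have cardY : Nat.card Y = 2 ^ n := by
    rw [Nat.card_congr hY.some.toEquiv, card_pow_aux]
  have cardA : Nat.card A = 2 ^ (2 * n) := by
    rw [Nat.card_congr hab.some.toEquiv, card_pow_aux]
  -- images of X and Y generate A
  have hsup : X' ⊔ Y' = ⊤ := by
    have h1 : (Subgroup.closure ((X : Set H) ∪ (Y : Set H))).map π = ⊤ := by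
      rw [hgen, ← MonoidHom.range_eq_map, MonoidHom.range_eq_top]
      exact hπ
    rwa [MonoidHom.map_closure, Set.image_union, Subgroup.closure_union,
      ← Subgroup.coe_map, ← Subgroup.coe_map, Subgroup.closure_eq, Subgroup.closure_eq] at h1
  -- card bounds on images
  have hsurjmap : ∀ S : Subgroup H, Function.Surjective
      (fun x : S => (⟨π x, Subgroup.mem_map_of_mem π x.2⟩ : S.map π)) := by
    rintro S ⟨a, ha⟩
    obtain ⟨x, hx, rfl⟩ := ha
    exact ⟨⟨x, hx⟩, rfl⟩
  have hcX' : Nat.card X' ≤ 2 ^ n := by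
    rw [← cardX]; exact Nat.card_le_card_of_surjective _ (hsurjmap X)
  have hcY' : Nat.card Y' ≤ 2 ^ n := by
    rw [← cardY]; exact Nat.card_le_card_of_surjective _ (hsurjmap Y)
  -- the multiplication map X' × Y' → A
  let φ : X' × Y' → A := fun p => (p.1 : A) * (p.2 : A)
  have hset : ((⊤ : Subgroup A) : Set A) = (X' : Set A) * (Y' : Set A) := by
    rw [← hsup]; exact Subgroup.mul_normal X' Y'
  have hφsurj : Function.Surjective φ := by
    intro a
    have ha : a ∈ ((⊤ : Subgroup A) : Set A) := Subgroup.mem_top a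
    rw [hset] at ha
    obtain ⟨x, hx, y, hy, hxy⟩ := ha
    exact ⟨(⟨x, hx⟩, ⟨y, hy⟩), hxy⟩
  have hcard_prod : Nat.card (X' × Y') = Nat.card A := by
    have h1 : Nat.card (X' × Y') = Nat.card X' * Nat.card Y' := Nat.card_prod _ _
    have hle : Nat.card A ≤ Nat.card (X' × Y') := Nat.card_le_card_of_surjective φ hφsurj
    have : Nat.card X' * Nat.card Y' ≤ 2 ^ n * 2 ^ n :=
      Nat.mul_le_mul hcX' hcY'
    have h2n : (2:ℕ) ^ n * 2 ^ n = 2 ^ (2 * n) := by rw [← pow_add, two_mul]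
    omega
  have hφbij : Function.Bijective φ :=
    (Nat.bijective_iff_surjective_and_card φ).2 ⟨hφsurj, hcard_prod⟩
  -- equality of cards forces card X' = 2^n, so π is injective on X
  have hcX'eq : Nat.card X' = 2 ^ n := by
    have h1 : Nat.card (X' × Y') = Nat.card X' * Nat.card Y' := Nat.card_prod _ _
    have h2n : (2:ℕ) ^ n * 2 ^ n = 2 ^ (2 * n) := by rw [← pow_add, two_mul]
    have hpos : 0 < Nat.card Y' := Nat.card_pos
    nlinarith [hcX', hcY', hcard_prod, cardA]
  -- the restriction of π to X
  let ψ : X → X' := fun x => ⟨π x, Subgroup.mem_map_of_mem π x.2⟩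
  have hψsurj : Function.Surjective ψ := hsurjmap X
  have hψcard : Nat.card X = Nat.card X' := by rw [cardX, hcX'eq]
  have hψbij : Function.Bijective ψ :=
    (Nat.bijective_iff_surjective_and_card ψ).2 ⟨hψsurj, hψcard⟩
  -- finish
  rw [Subgroup.eq_bot_iff_forall]
  intro x hx
  have hxX : x ∈ X := hx.1
  have hxY : x ∈ Y := hx.2
  have hz1 : π x ∈ X' := Subgroup.mem_map_of_mem π hxX
  have hz2 : (π x)⁻¹ ∈ Y' := Y'.inv_mem (Subgroup.mem_map_of_mem π hxY)
  have hφeq : φ (⟨π x, hz1⟩, ⟨(π x)⁻¹, hz2⟩) = φ (⟨1, X'.one_mem⟩, ⟨1, Y'.one_mem⟩) := by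
    simp [φ]
  have := hφbij.1 hφeq
  have hπx : π x = 1 := congrArg (fun p => (p.1 : A)) this
  have hψeq : ψ ⟨x, hxX⟩ = ψ ⟨1, X.one_mem⟩ := by
    apply Subtype.ext
    simp [ψ, hπx]
  have := hψbij.1 hψeq
  exact congrArg Subtype.val this
end

section
/- Let Γ be a finite connected graph with more than one edge, and suppose G ≤ Aut(Γ) is abelian, edge-transitive, and vertex-transitive. Then Γ is a cycle C_n for some n ≥ 3 and G is cyclic of order n. -/
/-- If `Γ` is a finite connected graph with more than one edge and
`G ≤ Aut(Γ)` is abelian, edge-transitive and vertex-transitive, then `Γ` is a cycle `C_n`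
for some `n ≥ 3` and `G` is cyclic of order `n`. -/
theorem statement4 {V : Type*} [Fintype V] (Γ : SimpleGraph V)
    (hconn : Γ.Connected) (hE : 1 < Γ.edgeSet.ncard)
    (G : Subgroup (Equiv.Perm V))
    (hAut : ∀ g ∈ G, ∀ u v : V, Γ.Adj (g u) (g v) ↔ Γ.Adj u v)
    (hab : ∀ a ∈ G, ∀ b ∈ G, a * b = b * a)
    (htrans : ∀ e ∈ Γ.edgeSet, ∀ e' ∈ Γ.edgeSet, ∃ g ∈ G, Sym2.map (⇑g) e = e')
    (hvtrans : ∀ u v : V, ∃ g ∈ G, g u = v) :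
    ∃ n : ℕ, 3 ≤ n ∧ Nonempty (Γ ≃g SimpleGraph.cycleGraph n) ∧
      IsCyclic G ∧ Nat.card G = n := by
  classical
  obtain ⟨v₀⟩ := hconn.nonempty
  -- regularity: an element of G fixing v₀ is the identity
  have hreg : ∀ g ∈ G, g v₀ = v₀ → g = 1 := by
    intro g hg hfix
    ext u
    obtain ⟨h, hh, rfl⟩ := hvtrans v₀ u
    have h1 : (g * h) v₀ = (h * g) v₀ := by rw [hab g hg h hh]
    simpa [Equiv.Perm.mul_apply, hfix] using h1
  have hreg2 : ∀ g ∈ G, ∀ h ∈ G, g v₀ = h v₀ → g = h := by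
    intro g hg h hh hgh
    have h1 : (h⁻¹ * g) v₀ = v₀ := by
      simp [Equiv.Perm.mul_apply, hgh]
    have h2 := hreg _ (mul_mem (inv_mem hh) hg) h1
    have := inv_mul_eq_one.mp h2
    exact this.symm
  -- find a neighbour of v₀
  have hedge : ∃ a b : V, Γ.Adj a b := by
    have hne : Γ.edgeSet.Nonempty := Set.nonempty_of_ncard_ne_zero (by omega)
    obtain ⟨e, he⟩ := hne
    induction e using Sym2.ind with
    | _ a b => exact ⟨a, b, he⟩
  obtain ⟨a, b, hab'⟩ := hedge
  obtain ⟨g₁, hg₁, hg₁a⟩ := hvtrans a v₀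
  have hadj1 : Γ.Adj v₀ (g₁ b) := by
    rw [← hg₁a]; exact (hAut g₁ hg₁ a b).mpr hab'
  obtain ⟨σ, hσG, hσv⟩ := hvtrans v₀ (g₁ b)
  have hadjσ : Γ.Adj v₀ (σ v₀) := hσv ▸ hadj1
  have hadjσ' : Γ.Adj v₀ (σ⁻¹ v₀) := by
    have := (hAut σ⁻¹ (inv_mem hσG) (σ v₀) v₀).mpr hadjσ.symm
    simpa using this
  -- the only neighbours of v₀ are σ v₀ and σ⁻¹ v₀
  have hnbr : ∀ w, Γ.Adj v₀ w → w = σ v₀ ∨ w = σ⁻¹ v₀ := by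
    intro w hw
    obtain ⟨g, hg, hmap⟩ := htrans s(v₀, σ v₀) (Γ.mem_edgeSet.mpr hadjσ)
      s(v₀, w) (Γ.mem_edgeSet.mpr hw)
    rw [Sym2.map_pair_eq, Sym2.eq_iff] at hmap
    rcases hmap with ⟨h1, h2⟩ | ⟨h1, h2⟩
    · have hg1 := hreg g hg h1
      left; rw [← h2, hg1]; simp
    · -- g v₀ = w and g (σ v₀) = v₀
      have hgs : (g * σ) v₀ = v₀ := by simpa [Equiv.Perm.mul_apply] using h2
      have := hreg _ (mul_mem hg hσG) hgs
      have hginv : g = σ⁻¹ := eq_inv_of_mul_eq_one_left this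
      right; rw [← h1, hginv]
  -- every vertex is in the σ-orbit of v₀
  have hstep : ∀ (x y : V), Γ.Walk x y → (∃ k : ℤ, (σ ^ k) v₀ = x) →
      ∃ k : ℤ, (σ ^ k) v₀ = y := by
    intro x y p
    induction p with
    | nil => exact id
    | @cons u c w hadj p ih =>
      intro hx
      apply ih
      obtain ⟨k, hk⟩ := hx
      have hmem : (σ ^ k : Equiv.Perm V) ∈ G := zpow_mem hσG k
      have h1 : Γ.Adj v₀ ((σ ^ k)⁻¹ c) := by
        have := (hAut _ (inv_mem hmem) u c).mpr hadj
        rwa [show ((σ ^ k)⁻¹ : Equiv.Perm V) u = v₀ from by rw [← hk]; simp] at this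
      rcases hnbr _ h1 with h2 | h2
      · refine ⟨k + 1, ?_⟩
        have hc : c = (σ ^ k) (σ v₀) := by
          have := congrArg (σ ^ k : Equiv.Perm V) h2
          simpa using this
        rw [hc, zpow_add_one, Equiv.Perm.mul_apply]
      · refine ⟨k - 1, ?_⟩
        have hc : c = (σ ^ k) (σ⁻¹ v₀) := by
          have := congrArg (σ ^ k : Equiv.Perm V) h2
          simpa using this
        rw [hc, zpow_sub_one, Equiv.Perm.mul_apply]
  have horb : ∀ u : V, ∃ k : ℤ, (σ ^ k : Equiv.Perm V) v₀ = u := by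
    intro u
    obtain ⟨p⟩ := hconn.preconnected v₀ u
    exact hstep v₀ u p ⟨0, by simp⟩
  -- G is generated by σ
  have hgen : ∀ g ∈ G, ∃ k : ℤ, σ ^ k = g := by
    intro g hg
    obtain ⟨k, hk⟩ := horb (g v₀)
    exact ⟨k, hreg2 _ (zpow_mem hσG k) g hg hk⟩
  -- the map g ↦ g v₀ is a bijection G ≃ V
  have hbij : Function.Bijective (fun g : G => (g : Equiv.Perm V) v₀) := by
    constructor
    · intro g h hgh
      exact Subtype.ext (hreg2 _ g.2 _ h.2 hgh)
    · intro u
      obtain ⟨g, hg, hgu⟩ := hvtrans v₀ u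
      exact ⟨⟨g, hg⟩, hgu⟩
  have hcardGV : Nat.card G = Fintype.card V := by
    rw [← Nat.card_eq_fintype_card]
    exact Nat.card_eq_of_bijective _ hbij
  have hGeq : G = Subgroup.zpowers σ := by
    apply le_antisymm
    · intro g hg
      obtain ⟨k, hk⟩ := hgen g hg
      exact Subgroup.mem_zpowers_iff.mpr ⟨k, hk⟩
    · exact (Subgroup.zpowers_le).mpr hσG
  have horder : orderOf σ = Fintype.card V := by
    rw [← hcardGV, hGeq, Nat.card_zpowers]
  -- card V ≥ 3
  have hn3 : 3 ≤ Fintype.card V := by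
    by_contra hlt
    push_neg at hlt
    have h1 : Γ.edgeSet.ncard = Γ.edgeFinset.card := by
      rw [Set.ncard_eq_toFinset_card']
      convert rfl
      ext e; simp
    have h2 := Γ.card_edgeFinset_le_card_choose_two
    have h3 : (Fintype.card V).choose 2 ≤ Nat.choose 2 2 :=
      Nat.choose_le_choose 2 (by omega)
    have h4 : Nat.choose 2 2 = 1 := Nat.choose_self 2
    omega
  obtain ⟨m, hm⟩ : ∃ m, Fintype.card V = m + 3 := ⟨Fintype.card V - 3, by omega⟩
  have horder3 : orderOf σ = m + 3 := by rw [horder, hm]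
  -- key adjacency characterization
  have hkey : ∀ a b : ℕ, Γ.Adj ((σ ^ a) v₀) ((σ ^ b) v₀) ↔
      σ ^ b = σ ^ (a + 1) ∨ σ ^ a = σ ^ (b + 1) := by
    intro a b
    constructor
    · intro h
      have hmem : (σ ^ a : Equiv.Perm V) ∈ G := pow_mem hσG a
      have h1 : Γ.Adj v₀ (((σ ^ a)⁻¹ * σ ^ b) v₀) := by
        have := (hAut _ (inv_mem hmem) _ _).mpr h
        simpa [Equiv.Perm.mul_apply] using this
      rcases hnbr _ h1 with h2 | h2
      · left
        have h3 : (σ ^ a)⁻¹ * σ ^ b = σ :=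
          hreg2 _ (mul_mem (inv_mem hmem) (pow_mem hσG b)) σ hσG
            (by simpa [Equiv.Perm.mul_apply] using h2)
        rw [pow_succ, ← inv_mul_eq_iff_eq_mul.mp h3]
      · right
        have h3 : (σ ^ a)⁻¹ * σ ^ b = σ⁻¹ :=
          hreg2 _ (mul_mem (inv_mem hmem) (pow_mem hσG b)) σ⁻¹ (inv_mem hσG)
            (by simpa [Equiv.Perm.mul_apply] using h2)
        have h4 : σ ^ b = σ ^ a * σ⁻¹ := inv_mul_eq_iff_eq_mul.mp h3
        rw [pow_succ, h4, mul_assoc, inv_mul_cancel, mul_one]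
    · intro h
      rcases h with h | h
      · have hA : Γ.Adj ((σ ^ a) v₀) ((σ ^ a) (σ v₀)) :=
          (hAut _ (pow_mem hσG a) _ _).mpr hadjσ
        rwa [show (σ ^ a) (σ v₀) = (σ ^ b) v₀ from by
          rw [h, pow_succ, Equiv.Perm.mul_apply]] at hA
      · have hA : Γ.Adj ((σ ^ b) v₀) ((σ ^ b) (σ v₀)) :=
          (hAut _ (pow_mem hσG b) _ _).mpr hadjσ
        rw [show (σ ^ b) (σ v₀) = (σ ^ a) v₀ from by
          rw [h, pow_succ, Equiv.Perm.mul_apply]] at hA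
        exact hA.symm
  have hval1 : ((1 : Fin (m + 3)) : ℕ) = 1 := Fin.val_one (m + 1)
  have hconv : ∀ p q : Fin (m + 3), σ ^ (p : ℕ) = σ ^ ((q : ℕ) + 1) ↔ p = q + 1 := by
    intro p q
    rw [pow_eq_pow_iff_modEq, horder3, Fin.ext_iff, Fin.val_add, hval1]
    have hp := p.isLt
    constructor
    · intro h
      have h' : (p : ℕ) % (m + 3) = ((q : ℕ) + 1) % (m + 3) := h
      rwa [Nat.mod_eq_of_lt p.isLt] at h'
    · intro h
      show (p : ℕ) % (m + 3) = ((q : ℕ) + 1) % (m + 3)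
      rw [h]
      exact Nat.mod_eq_of_lt (Nat.mod_lt _ (by omega))
  -- the vertex map
  have hfinj : Function.Injective (fun i : Fin (m + 3) => (σ ^ (i : ℕ)) v₀) := by
    intro i j hij
    have h1 : (σ ^ (i : ℕ) : Equiv.Perm V) = σ ^ (j : ℕ) :=
      hreg2 _ (pow_mem hσG _) _ (pow_mem hσG _) hij
    have h2 : (i : ℕ) % (m + 3) = (j : ℕ) % (m + 3) := by
      have := pow_eq_pow_iff_modEq.mp h1
      rwa [horder3] at this
    rw [Nat.mod_eq_of_lt i.isLt, Nat.mod_eq_of_lt j.isLt] at h2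
    exact Fin.ext h2
  have hfbij : Function.Bijective (fun i : Fin (m + 3) => (σ ^ (i : ℕ)) v₀) :=
    (Fintype.bijective_iff_injective_and_card _).mpr ⟨hfinj, by simp [hm]⟩
  -- Fin-level adjacency
  have hfinadj : ∀ i j : Fin (m + 3),
      Γ.Adj ((σ ^ (i : ℕ)) v₀) ((σ ^ (j : ℕ)) v₀) ↔ i - j = 1 ∨ j - i = 1 := by
    intro i j
    rw [hkey, hconv j i, hconv i j]
    constructor
    · rintro (h | h)
      · right; rw [h]; abel
      · left; rw [h]; abel
    · rintro (h | h)
      · right; rw [sub_eq_iff_eq_add] at h; rw [h]; abel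
      · left; rw [sub_eq_iff_eq_add] at h; rw [h]; abel
  -- build the isomorphism
  have hiso : Nonempty (Γ ≃g SimpleGraph.cycleGraph (m + 3)) := by
    refine ⟨RelIso.symm ⟨Equiv.ofBijective _ hfbij, ?_⟩⟩
    intro i j
    show Γ.Adj ((σ ^ (i : ℕ)) v₀) ((σ ^ (j : ℕ)) v₀) ↔
      (SimpleGraph.cycleGraph (m + 3)).Adj i j
    rw [hfinadj i j]
    exact (SimpleGraph.cycleGraph_adj (n := m + 1) (u := i) (v := j)).symm
  -- cyclicity
  have hcyc : IsCyclic G := by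
    refine ⟨⟨σ, hσG⟩, ?_⟩
    intro x
    obtain ⟨k, hk⟩ := hgen (x : Equiv.Perm V) x.2
    refine Subgroup.mem_zpowers_iff.mpr ⟨k, ?_⟩
    exact Subtype.ext (by push_cast; exact hk)
  exact ⟨m + 3, by omega, hiso, hcyc, by rw [hcardGV, hm]⟩
end

section
/- Let Γ be a finite connected graph with more than one edge, and suppose G ≤ Aut(Γ) is abelian and edge-transitive with exactly two orbits on vertices. Then Γ is a complete bipartite graph K_{m,n} whose biparts Δ and Σ are the two G-orbits (of sizes m and n), and G = M × N where M = G_v fixes Σ pointwise and is regular on Δ, and N = G_u fixes Δ pointwise and is regular on Σ, for u ∈ Δ, v ∈ Σ. -/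
/-- If `Γ` is a finite connected graph with more than one edge, and
`G ≤ Aut(Γ)` is abelian, edge-transitive, with exactly two vertex-orbits `Δ = u^G` and
`Σ' = v^G`, then `Γ` is the complete bipartite graph with biparts `Δ` and `Σ'`, and
`G = M × N` where `M = G_v` fixes `Σ'` pointwise and is regular on `Δ`, and `N = G_u`
fixes `Δ` pointwise and is regular on `Σ'`. -/
theorem statement5 {V : Type*} [Fintype V] (Γ : SimpleGraph V)
    (hconn : Γ.Connected) (hE : 1 < Γ.edgeSet.ncard)
    (G : Subgroup (Equiv.Perm V))
    (hAut : ∀ g ∈ G, ∀ u v : V, Γ.Adj (g u) (g v) ↔ Γ.Adj u v)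
    (hab : ∀ a ∈ G, ∀ b ∈ G, a * b = b * a)
    (htrans : ∀ e ∈ Γ.edgeSet, ∀ e' ∈ Γ.edgeSet, ∃ g ∈ G, Sym2.map (⇑g) e = e')
    (u v : V) (huv : ¬ ∃ g ∈ G, g u = v)
    (horb : ∀ w : V, (∃ g ∈ G, g u = w) ∨ (∃ g ∈ G, g v = w)) :
    -- Γ is complete bipartite with biparts the two orbits
    (∀ a b : V, Γ.Adj a b ↔
      (((∃ g ∈ G, g u = a) ∧ (∃ g ∈ G, g v = b)) ∨
       ((∃ g ∈ G, g v = a) ∧ (∃ g ∈ G, g u = b)))) ∧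
    -- M = G_v fixes Σ' = v^G pointwise
    (∀ g ∈ G, g v = v → ∀ w : V, (∃ g' ∈ G, g' v = w) → g w = w) ∧
    -- M = G_v is regular on Δ = u^G
    (∀ w w' : V, (∃ g ∈ G, g u = w) → (∃ g ∈ G, g u = w') →
      ∃! g : Equiv.Perm V, g ∈ G ∧ g v = v ∧ g w = w') ∧
    -- N = G_u fixes Δ = u^G pointwise
    (∀ g ∈ G, g u = u → ∀ w : V, (∃ g' ∈ G, g' u = w) → g w = w) ∧
    -- N = G_u is regular on Σ' = v^G
    (∀ w w' : V, (∃ g ∈ G, g v = w) → (∃ g ∈ G, g v = w') →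
      ∃! g : Equiv.Perm V, g ∈ G ∧ g u = u ∧ g w = w') ∧
    -- G = M × N (internal direct product)
    (∀ g ∈ G, ∃! p : Equiv.Perm V × Equiv.Perm V,
      (p.1 ∈ G ∧ p.1 v = v) ∧ (p.2 ∈ G ∧ p.2 u = u) ∧ g = p.1 * p.2) := by
  classical
  set D : V → Prop := fun w => ∃ g ∈ G, g u = w with hDdef
  set S : V → Prop := fun w => ∃ g ∈ G, g v = w with hSdef
  have hone : (1 : Equiv.Perm V) ∈ G := G.one_mem
  have hDu : D u := ⟨1, hone, rfl⟩
  have hSv : S v := ⟨1, hone, rfl⟩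
  have hmapD : ∀ g ∈ G, ∀ w, D w → D (g w) := by
    rintro g hg w ⟨k, hk, rfl⟩
    exact ⟨g * k, G.mul_mem hg hk, rfl⟩
  have hmapS : ∀ g ∈ G, ∀ w, S w → S (g w) := by
    rintro g hg w ⟨k, hk, rfl⟩
    exact ⟨g * k, G.mul_mem hg hk, rfl⟩
  have hdisj : ∀ w, D w → S w → False := by
    rintro w ⟨g, hg, rfl⟩ ⟨h, hh, hhw⟩
    refine huv ⟨h⁻¹ * g, G.mul_mem (G.inv_mem hh) hg, ?_⟩
    rw [Equiv.Perm.mul_apply, ← hhw, Equiv.Perm.inv_def, Equiv.symm_apply_apply]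
  -- generic: if g ∈ G fixes one point of an orbit, it fixes the whole orbit
  have hfixgen : ∀ (z : V), ∀ g ∈ G, ∀ w, (∃ h ∈ G, h z = w) → g w = w →
      ∀ w', (∃ k ∈ G, k z = w') → g w' = w' := by
    rintro z g hg w ⟨h, hh, rfl⟩ hfix w' ⟨k, hk, rfl⟩
    have h1 : g z = z := by
      have hcomm := hab g hg h hh
      have h2 : h (g z) = h z := by
        calc h (g z) = (h * g) z := rfl
          _ = (g * h) z := by rw [← hcomm]
          _ = g (h z) := rfl
          _ = h z := hfix
      exact h.injective h2
    calc g (k z) = (g * k) z := rfl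
      _ = (k * g) z := by rw [hab g hg k hk]
      _ = k (g z) := rfl
      _ = k z := by rw [h1]
  have hne : u ≠ v := fun h => huv ⟨1, hone, h⟩
  -- every vertex has a neighbour
  have hnbr : ∀ a : V, ∃ b, Γ.Adj a b := by
    intro a
    obtain ⟨w, hw⟩ : ∃ w : V, w ≠ a := by
      by_cases h : u = a
      · exact ⟨v, by rw [← h]; exact hne.symm⟩
      · exact ⟨u, h⟩
    obtain ⟨p⟩ := hconn.preconnected a w
    cases p with
    | nil => exact absurd rfl hw
    | cons h q => exact ⟨_, h⟩
  -- every edge crosses between the two orbits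
  have hcross : ∀ a b : V, Γ.Adj a b → (D a ∧ S b) ∨ (S a ∧ D b) := by
    intro a b hadj
    rcases horb a with ha | ha <;> rcases horb b with hb | hb
    · exfalso
      obtain ⟨c, hc⟩ := hnbr v
      obtain ⟨g, hg, hmap⟩ := htrans s(a, b) (Γ.mem_edgeSet.2 hadj)
        s(v, c) (Γ.mem_edgeSet.2 hc)
      rw [Sym2.map_pair_eq, Sym2.eq_iff] at hmap
      rcases hmap with ⟨h1, _⟩ | ⟨_, h2⟩
      · exact hdisj v (h1 ▸ hmapD g hg a ha) hSv
      · exact hdisj v (h2 ▸ hmapD g hg b hb) hSv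
    · exact Or.inl ⟨ha, hb⟩
    · exact Or.inr ⟨ha, hb⟩
    · exfalso
      obtain ⟨c, hc⟩ := hnbr u
      obtain ⟨g, hg, hmap⟩ := htrans s(a, b) (Γ.mem_edgeSet.2 hadj)
        s(u, c) (Γ.mem_edgeSet.2 hc)
      rw [Sym2.map_pair_eq, Sym2.eq_iff] at hmap
      rcases hmap with ⟨h1, _⟩ | ⟨_, h2⟩
      · exact hdisj u hDu (h1 ▸ hmapS g hg a ha)
      · exact hdisj u hDu (h2 ▸ hmapS g hg b hb)
  -- key claim: common neighbours propagate
  have hclaim : ∀ a b b' a' : V, Γ.Adj a b → Γ.Adj a b' → Γ.Adj a' b → S b → S b' →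
      Γ.Adj a' b' := by
    intro a b b' a' h1 h2 h3 hSb hSb'
    have hDa : D a := by
      rcases hcross a b h1 with ⟨h, _⟩ | ⟨_, h⟩
      · exact h
      · exact absurd hSb (fun hs => hdisj b h hs)
    obtain ⟨g, hg, hmap⟩ := htrans s(a, b) (Γ.mem_edgeSet.2 h1)
      s(a', b) (Γ.mem_edgeSet.2 h3)
    rw [Sym2.map_pair_eq, Sym2.eq_iff] at hmap
    rcases hmap with ⟨hga, hgb⟩ | ⟨hga, hgb⟩
    · have hb' : g b' = b' := hfixgen v g hg b hSb hgb b' hSb'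
      have := (hAut g hg a b').2 h2
      rwa [hga, hb'] at this
    · exact ((hdisj b (hga ▸ hmapD g hg a hDa) hSb)).elim
  -- seed edge from u into S
  obtain ⟨b₀, hub₀⟩ := hnbr u
  have hSb₀ : S b₀ := by
    rcases hcross u b₀ hub₀ with ⟨_, h⟩ | ⟨h, _⟩
    · exact h
    · exact (hdisj u hDu h).elim
  -- P w : w is adjacent to b₀, or w has the same neighbourhood as b₀
  set P : V → Prop := fun w => Γ.Adj w b₀ ∨ ∀ x, Γ.Adj x w ↔ Γ.Adj x b₀ with hPdef
  have hclosure : ∀ x y : V, Γ.Adj x y → P x → P y := by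
    intro x y hxy hPx
    rcases hPx with hxb | hT
    · have hSy : S y := by
        rcases hcross x y hxy with ⟨_, h⟩ | ⟨hSx, _⟩
        · exact h
        · exfalso
          rcases hcross x b₀ hxb with ⟨hDx, _⟩ | ⟨_, hDb₀⟩
          · exact hdisj x hDx hSx
          · exact hdisj b₀ hDb₀ hSb₀
      refine Or.inr fun x' => ⟨fun h => ?_, fun h => ?_⟩
      · exact hclaim x y b₀ x' hxy hxb h hSy hSb₀
      · exact hclaim x b₀ y x' hxb hxy h hSb₀ hSy
    · exact Or.inl ((hT y).1 hxy.symm)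
  have hkey : ∀ w, P w := by
    have step : ∀ (x y : V) (p : Γ.Walk x y), P x → P y := by
      intro x y p
      induction p with
      | nil => exact id
      | cons h q ih => exact fun hx => ih (hclosure _ _ h hx)
    intro w
    obtain ⟨p⟩ := hconn.preconnected b₀ w
    exact step _ _ p (Or.inr fun x => Iff.rfl)
  -- complete bipartite
  have hcb : ∀ a b : V, D a → S b → Γ.Adj a b := by
    intro a b hDa hSb
    have hab₀ : Γ.Adj a b₀ := by
      rcases hkey a with h | hT
      · exact h
      · exfalso
        obtain ⟨c, hc⟩ := hnbr a
        have h1 : Γ.Adj c b₀ := (hT c).1 hc.symm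
        have hSc : S c := by
          rcases hcross a c hc with ⟨_, h⟩ | ⟨h, _⟩
          · exact h
          · exact (hdisj a hDa h).elim
        rcases hcross c b₀ h1 with ⟨h, _⟩ | ⟨_, h⟩
        · exact hdisj c h hSc
        · exact hdisj b₀ h hSb₀
    rcases hkey b with h | hT
    · exfalso
      rcases hcross b b₀ h with ⟨hd, _⟩ | ⟨_, hd⟩
      · exact hdisj b hd hSb
      · exact hdisj b₀ hd hSb₀
    · exact (hT a).2 hab₀
  -- regularity of G_v on D
  have hregM : ∀ w w' : V, D w → D w' →
      ∃! g : Equiv.Perm V, g ∈ G ∧ g v = v ∧ g w = w' := by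
    intro w w' hw hw'
    have h1 : Γ.Adj w v := hcb w v hw hSv
    have h2 : Γ.Adj w' v := hcb w' v hw' hSv
    obtain ⟨g, hg, hmap⟩ := htrans s(w, v) (Γ.mem_edgeSet.2 h1)
      s(w', v) (Γ.mem_edgeSet.2 h2)
    rw [Sym2.map_pair_eq, Sym2.eq_iff] at hmap
    rcases hmap with ⟨hgw, hgv⟩ | ⟨hgw, hgv⟩
    swap
    · exact ((hdisj v (hgw ▸ hmapD g hg w hw) hSv)).elim
    refine ⟨g, ⟨hg, hgv, hgw⟩, ?_⟩
    rintro g' ⟨hg', hg'v, hg'w⟩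
    have hkG : g⁻¹ * g' ∈ G := G.mul_mem (G.inv_mem hg) hg'
    have hginv_v : g⁻¹ v = v := by
      conv_lhs => rw [← hgv]
      exact Equiv.symm_apply_apply g v
    have hginv_w : g⁻¹ w' = w := by
      conv_lhs => rw [← hgw]
      exact Equiv.symm_apply_apply g w
    have hkv : (g⁻¹ * g') v = v := by
      rw [Equiv.Perm.mul_apply, hg'v, hginv_v]
    have hkw : (g⁻¹ * g') w = w := by
      rw [Equiv.Perm.mul_apply, hg'w, hginv_w]
    have hkall : ∀ x, (g⁻¹ * g') x = x := by
      intro x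
      rcases horb x with hx | hx
      · exact hfixgen u (g⁻¹ * g') hkG w hw hkw x hx
      · exact hfixgen v (g⁻¹ * g') hkG v hSv hkv x hx
    ext x
    have := hkall x
    rw [Equiv.Perm.mul_apply] at this
    calc g' x = g (g⁻¹ (g' x)) := (Equiv.apply_symm_apply g (g' x)).symm
      _ = g x := by rw [this]
  -- regularity of G_u on S
  have hregN : ∀ w w' : V, S w → S w' →
      ∃! g : Equiv.Perm V, g ∈ G ∧ g u = u ∧ g w = w' := by
    intro w w' hw hw'
    have h1 : Γ.Adj w u := (hcb u w hDu hw).symm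
    have h2 : Γ.Adj w' u := (hcb u w' hDu hw').symm
    obtain ⟨g, hg, hmap⟩ := htrans s(w, u) (Γ.mem_edgeSet.2 h1)
      s(w', u) (Γ.mem_edgeSet.2 h2)
    rw [Sym2.map_pair_eq, Sym2.eq_iff] at hmap
    rcases hmap with ⟨hgw, hgu⟩ | ⟨hgw, hgu⟩
    swap
    · exact ((hdisj u hDu (hgw ▸ hmapS g hg w hw))).elim
    refine ⟨g, ⟨hg, hgu, hgw⟩, ?_⟩
    rintro g' ⟨hg', hg'u, hg'w⟩
    have hkG : g⁻¹ * g' ∈ G := G.mul_mem (G.inv_mem hg) hg'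
    have hginv_u : g⁻¹ u = u := by
      conv_lhs => rw [← hgu]
      exact Equiv.symm_apply_apply g u
    have hginv_w : g⁻¹ w' = w := by
      conv_lhs => rw [← hgw]
      exact Equiv.symm_apply_apply g w
    have hku : (g⁻¹ * g') u = u := by
      rw [Equiv.Perm.mul_apply, hg'u, hginv_u]
    have hkw : (g⁻¹ * g') w = w := by
      rw [Equiv.Perm.mul_apply, hg'w, hginv_w]
    have hkall : ∀ x, (g⁻¹ * g') x = x := by
      intro x
      rcases horb x with hx | hx
      · exact hfixgen u (g⁻¹ * g') hkG u hDu hku x hx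
      · exact hfixgen v (g⁻¹ * g') hkG w hw hkw x hx
    ext x
    have := hkall x
    rw [Equiv.Perm.mul_apply] at this
    calc g' x = g (g⁻¹ (g' x)) := (Equiv.apply_symm_apply g (g' x)).symm
      _ = g x := by rw [this]
  refine ⟨?_, ?_, hregM, ?_, hregN, ?_⟩
  · intro a b
    constructor
    · exact hcross a b
    · rintro (⟨h1, h2⟩ | ⟨h1, h2⟩)
      · exact hcb a b h1 h2
      · exact (hcb b a h2 h1).symm
  · intro g hg hgv w hw
    exact hfixgen v g hg v hSv hgv w hw
  · intro g hg hgu w hw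
    exact hfixgen u g hg u hDu hgu w hw
  · intro g hg
    obtain ⟨m, ⟨hmG, hmv, hmu⟩, hmuniq⟩ := hregM u (g u) hDu ⟨g, hg, rfl⟩
    refine ⟨(m, m⁻¹ * g), ⟨⟨hmG, hmv⟩, ⟨G.mul_mem (G.inv_mem hmG) hg, ?_⟩, ?_⟩, ?_⟩
    · show m⁻¹ (g u) = u
      rw [← hmu, Equiv.Perm.inv_def, Equiv.symm_apply_apply]
    · group
    · rintro ⟨p₁, p₂⟩ ⟨⟨h1G, h1v⟩, ⟨h2G, h2u⟩, hprod⟩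
      have hp1u : p₁ u = g u := by
        conv_rhs => rw [hprod]
        show p₁ u = p₁ (p₂ u)
        rw [h2u]
      have hp1 : p₁ = m := hmuniq p₁ ⟨h1G, h1v, hp1u⟩
      have hp2 : p₂ = m⁻¹ * g := by
        rw [← hp1, hprod]
        group
      exact Prod.ext hp1 hp2
end

section
/- In the group I(n) (n ≥ 2), the derived subgroup I(n)' equals the subgroup X ⊗ Y (the set of elements of the form 0+0+A), and this subgroup coincides with the center Z(I(n)). -/
open TensorProduct

/-- `X = F_2^n`, the `n`-dimensional vector space over `F_2`. -/
abbrev Vn (n : ℕ) := Fin n → ZMod 2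

/-- The tensor product `X ⊗ Y` over `F_2`. -/
abbrev Tn (n : ℕ) := TensorProduct (ZMod 2) (Vn n) (Vn n)

/-- The underlying set `X ⊕ Y ⊕ (X ⊗ Y)` of the group `I(n)` of
Definition `concreteConstruction`. -/
def ICarrier (n : ℕ) := Vn n × Vn n × Tn n

lemma char2_add_self {M : Type*} [AddCommGroup M] [Module (ZMod 2) M] (a : M) :
    a + a = 0 := by
  have h : (2 : ZMod 2) • a = a + a := two_smul _ a
  rw [show (2 : ZMod 2) = 0 by decide, zero_smul] at h
  exact h.symm

namespace ICarrier

variable {n : ℕ}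

noncomputable instance : AddCommGroup (ICarrier n) :=
  inferInstanceAs (AddCommGroup (Vn n × Vn n × Tn n))

noncomputable instance : Module (ZMod 2) (ICarrier n) :=
  inferInstanceAs (Module (ZMod 2) (Vn n × Vn n × Tn n))

/-- The element `x + y + A` of `I(n)`. -/
def mk (x y : Vn n) (A : Tn n) : ICarrier n := (x, y, A)

/-- The `X`-component of an element of `I(n)`. -/
def x (p : ICarrier n) : Vn n := Prod.fst p

/-- The `Y`-component of an element of `I(n)`. -/
def y (p : ICarrier n) : Vn n := (Prod.snd p).1

/-- The `X ⊗ Y`-component of an element of `I(n)`. -/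
def A (p : ICarrier n) : Tn n := (Prod.snd p).2

@[ext] lemma ext {p q : ICarrier n} (h1 : p.x = q.x) (h2 : p.y = q.y)
    (h3 : p.A = q.A) : p = q :=
  Prod.ext h1 (Prod.ext h2 h3)

@[simp] lemma x_add (p q : ICarrier n) : (p + q).x = p.x + q.x := rfl
@[simp] lemma y_add (p q : ICarrier n) : (p + q).y = p.y + q.y := rfl
@[simp] lemma A_add (p q : ICarrier n) : (p + q).A = p.A + q.A := rfl
@[simp] lemma x_mk (a b : Vn n) (c : Tn n) : (mk a b c).x = a := rfl
@[simp] lemma y_mk (a b : Vn n) (c : Tn n) : (mk a b c).y = b := rfl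
@[simp] lemma A_mk (a b : Vn n) (c : Tn n) : (mk a b c).A = c := rfl
@[simp] lemma x_zero : (0 : ICarrier n).x = 0 := rfl
@[simp] lemma y_zero : (0 : ICarrier n).y = 0 := rfl
@[simp] lemma A_zero : (0 : ICarrier n).A = 0 := rfl

/-- Multiplication in `I(n)`: `g₁g₂ = g₁ + g₂ + x₂ ⊗ y₁` (Equation `eqnMultiplication`). -/
noncomputable instance : Mul (ICarrier n) :=
  ⟨fun p q => p + q + mk 0 0 (q.x ⊗ₜ[ZMod 2] p.y)⟩

noncomputable instance : One (ICarrier n) := ⟨(0 : ICarrier n)⟩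

/-- Inversion in `I(n)`: `g⁻¹ = g + x ⊗ y` (Equation `eqnInverse`). -/
noncomputable instance : Inv (ICarrier n) :=
  ⟨fun p => p + mk 0 0 (p.x ⊗ₜ[ZMod 2] p.y)⟩

lemma mul_def (p q : ICarrier n) :
    p * q = p + q + mk 0 0 (q.x ⊗ₜ[ZMod 2] p.y) := rfl

lemma one_def : (1 : ICarrier n) = 0 := rfl

lemma inv_def (p : ICarrier n) :
    p⁻¹ = p + mk 0 0 (p.x ⊗ₜ[ZMod 2] p.y) := rfl

@[simp] lemma x_mul (p q : ICarrier n) : (p * q).x = p.x + q.x := by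
  show p.x + q.x + 0 = _; rw [add_zero]
@[simp] lemma y_mul (p q : ICarrier n) : (p * q).y = p.y + q.y := by
  show p.y + q.y + 0 = _; rw [add_zero]
@[simp] lemma A_mul (p q : ICarrier n) :
    (p * q).A = p.A + q.A + q.x ⊗ₜ[ZMod 2] p.y := rfl

@[simp] lemma x_inv (p : ICarrier n) : (p⁻¹).x = p.x := by
  show p.x + 0 = _; rw [add_zero]
@[simp] lemma y_inv (p : ICarrier n) : (p⁻¹).y = p.y := by
  show p.y + 0 = _; rw [add_zero]
@[simp] lemma A_inv (p : ICarrier n) :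
    (p⁻¹).A = p.A + p.x ⊗ₜ[ZMod 2] p.y := rfl

noncomputable instance : Group (ICarrier n) :=
  Group.ofLeftAxioms
    (fun p q r => by
      apply ext <;>
        simp [TensorProduct.add_tmul, TensorProduct.tmul_add] <;> abel)
    (fun p => by
      apply ext <;> simp [one_def, TensorProduct.tmul_zero])
    (fun p => by
      apply ext
      · simp [one_def, char2_add_self]
      · simp [one_def, char2_add_self]
      · simp only [A_mul, A_inv, y_inv, one_def, A_zero]
        calc p.A + p.x ⊗ₜ[ZMod 2] p.y + p.A + p.x ⊗ₜ[ZMod 2] p.y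
            = (p.A + p.A) + (p.x ⊗ₜ[ZMod 2] p.y + p.x ⊗ₜ[ZMod 2] p.y) := by abel
          _ = 0 := by rw [char2_add_self, char2_add_self, add_zero])

end ICarrier


section Aux

variable {n : ℕ}

lemma char2_zsmul_two {M : Type*} [AddCommGroup M] [Module (ZMod 2) M] (a : M) :
    (2 : ℤ) • a = 0 := by
  rw [two_zsmul]; exact char2_add_self a

lemma char2_two_mul {n : ℕ} (a : Vn n) : 2 * a = 0 := by
  have h2 : (2 : Vn n) = 0 := by funext j; rfl
  rw [h2, zero_mul]

/-- The subgroup `{0 + 0 + A}` of `I(n)`. -/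
noncomputable def TSub (n : ℕ) : Subgroup (ICarrier n) where
  carrier := {p | p.x = 0 ∧ p.y = 0}
  one_mem' := by simp [ICarrier.one_def]
  mul_mem' := by
    rintro a b ⟨ha1, ha2⟩ ⟨hb1, hb2⟩
    constructor <;> simp_all
  inv_mem' := by
    rintro a ⟨ha1, ha2⟩
    constructor <;> simp_all

open scoped commutatorElement in
lemma comm_elt (a b : Vn n) :
    ⁅ICarrier.mk a 0 (0 : Tn n), ICarrier.mk 0 b (0 : Tn n)⁆ =
      ICarrier.mk 0 0 (a ⊗ₜ[ZMod 2] b) := by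
  show _ * _ * _⁻¹ * _⁻¹ = _
  apply ICarrier.ext <;>
    simp [TensorProduct.add_tmul, TensorProduct.tmul_add, TensorProduct.tmul_zero,
      TensorProduct.zero_tmul] <;>
    abel_nf <;> simp [char2_zsmul_two, char2_two_mul]

lemma mk_mul_mk (A B : Tn n) :
    ICarrier.mk (0 : Vn n) 0 A * ICarrier.mk 0 0 B = ICarrier.mk 0 0 (A + B) := by
  apply ICarrier.ext <;> simp [TensorProduct.zero_tmul]

lemma commutator_le_TSub : commutator (ICarrier n) ≤ TSub n := by
  rw [commutator_def, Subgroup.commutator_le]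
  intro g _ h _
  constructor <;>
  · show _ = _
    simp only [commutatorElement_def, ICarrier.x_mul, ICarrier.y_mul, ICarrier.x_inv, ICarrier.y_inv]
    abel_nf
    simp [char2_zsmul_two, char2_two_mul]

open scoped commutatorElement in
lemma TSub_le_commutator : TSub n ≤ commutator (ICarrier n) := by
  rintro p ⟨h1, h2⟩
  have hp : p = ICarrier.mk 0 0 p.A := ICarrier.ext h1 h2 rfl
  rw [hp]
  induction p.A using TensorProduct.induction_on with
  | zero =>
      exact Subgroup.one_mem _
  | tmul a b =>
      rw [← comm_elt a b]
      exact Subgroup.commutator_mem_commutator (Subgroup.mem_top _) (Subgroup.mem_top _)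
  | add A B hA hB =>
      rw [← mk_mul_mk]
      exact Subgroup.mul_mem _ hA hB

/-- Contraction `A ⊗ b ↦ (A i) • b`. -/
noncomputable def contrL (i : Fin n) : Tn n →ₗ[ZMod 2] Vn n :=
  (TensorProduct.lid (ZMod 2) (Vn n)).toLinearMap ∘ₗ
    TensorProduct.map (LinearMap.proj i) LinearMap.id

noncomputable def contrR (i : Fin n) : Tn n →ₗ[ZMod 2] Vn n :=
  (TensorProduct.rid (ZMod 2) (Vn n)).toLinearMap ∘ₗ
    TensorProduct.map LinearMap.id (LinearMap.proj i)

@[simp] lemma contrL_tmul (i : Fin n) (a b : Vn n) :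
    contrL i (a ⊗ₜ[ZMod 2] b) = a i • b := by
  simp [contrL]

@[simp] lemma contrR_tmul (i : Fin n) (a b : Vn n) :
    contrR i (a ⊗ₜ[ZMod 2] b) = b i • a := by
  simp [contrR]

lemma center_le_TSub (hn : 0 < n) : Subgroup.center (ICarrier n) ≤ TSub n := by
  intro p hp
  rw [Subgroup.mem_center_iff] at hp
  set i : Fin n := ⟨0, hn⟩
  set e : Vn n := Pi.single i 1 with he
  have key : ∀ g : ICarrier n, g.x ⊗ₜ[ZMod 2] p.y = p.x ⊗ₜ[ZMod 2] g.y := by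
    intro g
    have := congrArg ICarrier.A (hp g)
    simp only [ICarrier.A_mul] at this
    have h' : g.A + p.A + p.x ⊗ₜ[ZMod 2] g.y = p.A + g.A + g.x ⊗ₜ[ZMod 2] p.y := this
    have := congrArg (fun t => t + (g.A + p.A)) h'
    simpa [add_comm, add_left_comm, add_assoc, char2_add_self] using this.symm
  constructor
  · -- p.x = 0
    have h := key (ICarrier.mk 0 e 0)
    simp only [ICarrier.x_mk, ICarrier.y_mk, TensorProduct.zero_tmul] at h
    have := congrArg (contrR i) h.symm
    simpa [he, Pi.single_apply] using this
  · -- p.y = 0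
    have h := key (ICarrier.mk e 0 0)
    simp only [ICarrier.x_mk, ICarrier.y_mk, TensorProduct.tmul_zero] at h
    have := congrArg (contrL i) h
    simpa [he, Pi.single_apply] using this

lemma TSub_le_center : TSub n ≤ Subgroup.center (ICarrier n) := by
  rintro p ⟨h1, h2⟩
  rw [Subgroup.mem_center_iff]
  intro g
  apply ICarrier.ext <;>
    simp [h1, h2, TensorProduct.zero_tmul, TensorProduct.tmul_zero, add_comm]

end Aux

/-- In `I(n)` (`n ≥ 2`), the derived subgroup equals the subgroup
`X ⊗ Y = {0+0+A}`, and this subgroup coincides with the centre `Z(I(n))`. -/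
theorem statement8 (n : ℕ) (hn : 2 ≤ n) :
    ((commutator (ICarrier n) : Set (ICarrier n)) =
      {p : ICarrier n | p.x = 0 ∧ p.y = 0}) ∧
    commutator (ICarrier n) = Subgroup.center (ICarrier n) := by
  have hn0 : 0 < n := lt_of_lt_of_le two_pos hn
  have h1 : commutator (ICarrier n) = TSub n :=
    le_antisymm commutator_le_TSub TSub_le_commutator
  have h2 : (TSub n : Subgroup (ICarrier n)) = Subgroup.center (ICarrier n) :=
    le_antisymm TSub_le_center (center_le_TSub hn0)
  refine ⟨?_, by rw [h1, h2]⟩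
  rw [h1]
  rfl
end

section
/- For n ≥ 2, the group I(n) is an n-dimensional mixed dihedral group relative to X and Y: X and Y are subgroups isomorphic to C_2^n, I(n) = ⟨X, Y⟩, and I(n)/I(n)' ≅ C_2^{2n}. -/
open TensorProduct

/-- The subgroup `X = {x+0+0}` of `I(n)`. -/
noncomputable def XSub (n : ℕ) : Subgroup (ICarrier n) where
  carrier := {p | p.y = 0 ∧ p.A = 0}
  mul_mem' := by
    rintro p q ⟨h1, h2⟩ ⟨h3, h4⟩
    constructor <;>
      simp [h1, h2, h3, h4, TensorProduct.tmul_zero]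
  one_mem' := by
    constructor <;> simp [ICarrier.one_def]
  inv_mem' := by
    rintro p ⟨h1, h2⟩
    constructor <;> simp [h1, h2, TensorProduct.tmul_zero]

/-- The subgroup `Y = {0+y+0}` of `I(n)`. -/
noncomputable def YSub (n : ℕ) : Subgroup (ICarrier n) where
  carrier := {p | p.x = 0 ∧ p.A = 0}
  mul_mem' := by
    rintro p q ⟨h1, h2⟩ ⟨h3, h4⟩
    constructor <;>
      simp [h1, h2, h3, h4, TensorProduct.zero_tmul]
  one_mem' := by
    constructor <;> simp [ICarrier.one_def]
  inv_mem' := by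
    rintro p ⟨h1, h2⟩
    constructor <;> simp [h1, h2, TensorProduct.zero_tmul]

/-- `X ≅ C_2^n`. -/
noncomputable def XEquiv (n : ℕ) : (XSub n) ≃* (Fin n → Multiplicative (ZMod 2)) where
  toFun p := fun i => Multiplicative.ofAdd ((p : ICarrier n).x i)
  invFun f := ⟨⟨fun i => Multiplicative.toAdd (f i), 0, 0⟩, ⟨rfl, rfl⟩⟩
  left_inv p := by
    apply Subtype.ext
    exact ICarrier.ext rfl p.2.1.symm p.2.2.symm
  right_inv f := rfl
  map_mul' p q := by
    funext i
    show Multiplicative.ofAdd (((p : ICarrier n) * q).x i) = _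
    rw [ICarrier.x_mul]
    rfl

/-- `Y ≅ C_2^n`. -/
noncomputable def YEquiv (n : ℕ) : (YSub n) ≃* (Fin n → Multiplicative (ZMod 2)) where
  toFun p := fun i => Multiplicative.ofAdd ((p : ICarrier n).y i)
  invFun f := ⟨⟨0, fun i => Multiplicative.toAdd (f i), 0⟩, ⟨rfl, rfl⟩⟩
  left_inv p := by
    apply Subtype.ext
    exact ICarrier.ext p.2.1.symm rfl p.2.2.symm
  right_inv f := rfl
  map_mul' p q := by
    funext i
    show Multiplicative.ofAdd (((p : ICarrier n) * q).y i) = _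
    rw [ICarrier.y_mul]
    rfl

lemma mk_x_mem_closure (n : ℕ) (x : Vn n) :
    ICarrier.mk x 0 0 ∈
      Subgroup.closure ((XSub n : Set (ICarrier n)) ∪ (YSub n : Set (ICarrier n))) :=
  Subgroup.subset_closure (Or.inl ⟨rfl, rfl⟩)

lemma mk_y_mem_closure (n : ℕ) (y : Vn n) :
    ICarrier.mk 0 y 0 ∈
      Subgroup.closure ((XSub n : Set (ICarrier n)) ∪ (YSub n : Set (ICarrier n))) :=
  Subgroup.subset_closure (Or.inr ⟨rfl, rfl⟩)

lemma mk_tmul_eq (n : ℕ) (x y : Vn n) :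
    ICarrier.mk 0 0 (x ⊗ₜ[ZMod 2] y) =
      (ICarrier.mk 0 y 0 * ICarrier.mk x 0 0) * (ICarrier.mk 0 y 0 * ICarrier.mk x 0 0) := by
  apply ICarrier.ext <;>
    simp [ICarrier.mul_def, TensorProduct.tmul_zero, TensorProduct.zero_tmul,
      char2_add_self]

lemma mk_A_mul (n : ℕ) (A B : Tn n) :
    ICarrier.mk 0 0 A * ICarrier.mk 0 0 B = ICarrier.mk 0 0 (A + B) := by
  apply ICarrier.ext <;>
    simp [ICarrier.mul_def, TensorProduct.zero_tmul]

lemma mk_A_mem_closure (n : ℕ) (A : Tn n) :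
    ICarrier.mk 0 0 A ∈
      Subgroup.closure ((XSub n : Set (ICarrier n)) ∪ (YSub n : Set (ICarrier n))) := by
  induction A using TensorProduct.induction_on with
  | zero => exact Subgroup.one_mem _
  | tmul x y =>
      rw [mk_tmul_eq n x y]
      exact Subgroup.mul_mem _
        (Subgroup.mul_mem _ (mk_y_mem_closure n y) (mk_x_mem_closure n x))
        (Subgroup.mul_mem _ (mk_y_mem_closure n y) (mk_x_mem_closure n x))
  | add A B hA hB =>
      rw [← mk_A_mul]
      exact Subgroup.mul_mem _ hA hB

lemma decomp (n : ℕ) (p : ICarrier n) :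
    p = ICarrier.mk p.x 0 0 * ICarrier.mk 0 p.y 0 * ICarrier.mk 0 0 p.A := by
  apply ICarrier.ext <;>
    simp [ICarrier.mul_def, TensorProduct.tmul_zero, TensorProduct.zero_tmul]

lemma closure_eq_top (n : ℕ) :
    Subgroup.closure ((XSub n : Set (ICarrier n)) ∪ (YSub n : Set (ICarrier n))) = ⊤ := by
  rw [eq_top_iff]
  intro p _
  rw [decomp n p]
  exact Subgroup.mul_mem _
    (Subgroup.mul_mem _ (mk_x_mem_closure n p.x) (mk_y_mem_closure n p.y))
    (mk_A_mem_closure n p.A)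

/-- Splitting `Fin (2*n)` as two copies of `Fin n`. -/
def finSplit (n : ℕ) : Fin (2 * n) ≃ Fin n ⊕ Fin n :=
  (finCongr (two_mul n)).trans finSumFinEquiv.symm

/-- The abelianization map `I(n) → C_2^{2n}`. -/
noncomputable def abHom (n : ℕ) : ICarrier n →* (Fin (2 * n) → Multiplicative (ZMod 2)) where
  toFun p := fun i => Multiplicative.ofAdd (Sum.elim p.x p.y (finSplit n i))
  map_one' := by
    funext i
    show Multiplicative.ofAdd
      (Sum.elim (1 : ICarrier n).x (1 : ICarrier n).y (finSplit n i)) = 1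
    cases finSplit n i <;> rfl
  map_mul' p q := by
    funext i
    show Multiplicative.ofAdd (Sum.elim (p * q).x (p * q).y (finSplit n i)) =
      Multiplicative.ofAdd (Sum.elim p.x p.y (finSplit n i)) *
        Multiplicative.ofAdd (Sum.elim q.x q.y (finSplit n i))
    rw [ICarrier.x_mul, ICarrier.y_mul]
    cases finSplit n i <;> rfl

lemma abHom_surjective (n : ℕ) : Function.Surjective (abHom n) := by
  intro f
  refine ⟨⟨fun j => Multiplicative.toAdd (f ((finSplit n).symm (Sum.inl j))),
    fun j => Multiplicative.toAdd (f ((finSplit n).symm (Sum.inr j))), 0⟩, ?_⟩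
  funext i
  show Multiplicative.ofAdd (Sum.elim _ _ (finSplit n i)) = f i
  conv_rhs => rw [← (finSplit n).symm_apply_apply i]
  cases finSplit n i <;> rfl

open scoped commutatorElement in
lemma mk_tmul_eq_commutator (n : ℕ) (x y : Vn n) :
    ICarrier.mk 0 0 (x ⊗ₜ[ZMod 2] y) = ⁅ICarrier.mk 0 y 0, ICarrier.mk x 0 0⁆ := by
  rw [commutatorElement_def]
  apply ICarrier.ext <;>
    simp [ICarrier.mul_def, ICarrier.inv_def, TensorProduct.tmul_zero,
      TensorProduct.zero_tmul, char2_add_self]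

lemma mk_A_mem_commutator (n : ℕ) (A : Tn n) :
    ICarrier.mk 0 0 A ∈ commutator (ICarrier n) := by
  induction A using TensorProduct.induction_on with
  | zero => exact Subgroup.one_mem _
  | tmul x y =>
      rw [mk_tmul_eq_commutator n x y]
      exact Subgroup.commutator_mem_commutator (Subgroup.mem_top _) (Subgroup.mem_top _)
  | add A B hA hB =>
      rw [← mk_A_mul]
      exact Subgroup.mul_mem _ hA hB

lemma ker_abHom (n : ℕ) : (abHom n).ker = commutator (ICarrier n) := by
  apply le_antisymm
  · intro p hp
    rw [MonoidHom.mem_ker] at hp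
    have hx : p.x = 0 := by
      funext j
      have := congrFun hp ((finSplit n).symm (Sum.inl j))
      simpa [abHom, Equiv.apply_symm_apply] using this
    have hy : p.y = 0 := by
      funext j
      have := congrFun hp ((finSplit n).symm (Sum.inr j))
      simpa [abHom, Equiv.apply_symm_apply] using this
    have : p = ICarrier.mk 0 0 p.A := ICarrier.ext hx hy rfl
    rw [this]
    exact mk_A_mem_commutator n p.A
  · exact Abelianization.commutator_subset_ker (abHom n)

/-- For `n ≥ 2`, `I(n)` is an `n`-dimensional mixed dihedral group relative
to `X` and `Y`: `X` and `Y` are subgroups isomorphic to `C_2^n`, `I(n) = ⟨X, Y⟩`, and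
`I(n)/I(n)' ≅ C_2^{2n}`. -/
theorem statement11 (n : ℕ) (hn : 2 ≤ n) :
    Nonempty ((XSub n) ≃* (Fin n → Multiplicative (ZMod 2))) ∧
    Nonempty ((YSub n) ≃* (Fin n → Multiplicative (ZMod 2))) ∧
    Subgroup.closure ((XSub n : Set (ICarrier n)) ∪ (YSub n : Set (ICarrier n))) = ⊤ ∧
    Nonempty ((ICarrier n ⧸ commutator (ICarrier n)) ≃*
      (Fin (2 * n) → Multiplicative (ZMod 2))) := by
  refine ⟨⟨XEquiv n⟩, ⟨YEquiv n⟩, closure_eq_top n, ⟨?_⟩⟩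
  exact (QuotientGroup.quotientMulEquivOfEq (ker_abHom n).symm).trans
    (QuotientGroup.quotientKerEquivOfSurjective _ (abHom_surjective n))
end

section
/- Let H be an n-dimensional mixed dihedral group relative to X and Y, and let Γ = Cay(H, S) with S = (X ∪ Y) \ {1}. Then for every triangle {g, h, k} in Γ, either all three of gh⁻¹, hk⁻¹, gk⁻¹ lie in X, or all three lie in Y. -/
/-- The Cayley graph `Cay(H, S)`: vertex set `H`, edges `{g, sg}` for `s ∈ S`. -/
def cayleyGraph {H : Type*} [Group H] (S : Set H) : SimpleGraph H :=
  SimpleGraph.fromRel (fun a b => b * a⁻¹ ∈ S)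

/-- The right coset `Xg` of a subgroup `X`, as a set. -/
def rcoset {H : Type*} [Group H] (X : Subgroup H) (g : H) : Set H :=
  {p | p * g⁻¹ ∈ X}

/-- In a mixed dihedral setup, `X ∩ Y = 1`. -/
lemma statement13_aux_trivial_inter {H : Type*} [Group H] [Finite H] (n : ℕ)
    (X Y : Subgroup H)
    (hX : Nonempty (X ≃* (Fin n → Multiplicative (ZMod 2))))
    (hY : Nonempty (Y ≃* (Fin n → Multiplicative (ZMod 2))))
    (hgen : Subgroup.closure ((X : Set H) ∪ (Y : Set H)) = ⊤)
    (hab : Nonempty ((H ⧸ commutator H) ≃* (Fin (2 * n) → Multiplicative (ZMod 2)))) :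
    ∀ a : H, a ∈ X → a ∈ Y → a = 1 := by
  have hcard2 : Nat.card (Fin n → Multiplicative (ZMod 2)) = 2 ^ n := by
    simp [Nat.card_pi, Nat.card_eq_fintype_card]
  have cardX : Nat.card X = 2 ^ n := by
    rw [Nat.card_congr hX.some.toEquiv, hcard2]
  have cardY : Nat.card Y = 2 ^ n := by
    rw [Nat.card_congr hY.some.toEquiv, hcard2]
  have cardA : Nat.card (Abelianization H) = 2 ^ (2 * n) := by
    show Nat.card (H ⧸ commutator H) = 2 ^ (2 * n)
    rw [Nat.card_congr hab.some.toEquiv]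
    simp [Nat.card_pi, Nat.card_eq_fintype_card]
  set π : H →* Abelianization H := Abelianization.of with hπ
  have hπsurj : Function.Surjective π := fun q => Quotient.exists_rep q
  have hsup : X ⊔ Y = ⊤ := by
    rw [← hgen, Subgroup.closure_union, Subgroup.closure_eq, Subgroup.closure_eq]
  have hmapsup : X.map π ⊔ Y.map π = ⊤ := by
    rw [← Subgroup.map_sup, hsup, Subgroup.map_top_of_surjective _ hπsurj]
  set f : X × Y → Abelianization H := fun p => π (p.1 * p.2) with hf
  have hfsurj : Function.Surjective f := by
    intro q
    obtain ⟨z, rfl⟩ := hπsurj q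
    have hz : π z ∈ X.map π ⊔ Y.map π := by rw [hmapsup]; trivial
    rw [Subgroup.mem_sup] at hz
    obtain ⟨x', hx', y', hy', hxy⟩ := hz
    obtain ⟨x, hx, rfl⟩ := hx'
    obtain ⟨y, hy, rfl⟩ := hy'
    exact ⟨(⟨x, hx⟩, ⟨y, hy⟩), by simpa [hf] using hxy⟩
  have hfbij : Function.Bijective f := by
    rw [Nat.bijective_iff_surjective_and_card]
    refine ⟨hfsurj, ?_⟩
    rw [Nat.card_prod, cardX, cardY, cardA, ← pow_add, two_mul]
  intro a haX haY
  have := hfbij.1 (a₁ := (⟨a, haX⟩, 1)) (a₂ := (1, ⟨a, haY⟩)) (by simp [hf])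
  have h1 := congrArg (fun p => ((p.1 : X) : H)) this
  simpa using h1

/-- An edge of the Cayley graph gives a nontrivial element of `X ∪ Y`. -/
lemma statement13_aux_adj {H : Type*} [Group H] (X Y : Subgroup H) (a b : H)
    (hadj : (cayleyGraph (((X : Set H) ∪ (Y : Set H)) \ {1})).Adj a b) :
    (a * b⁻¹ ∈ X ∨ a * b⁻¹ ∈ Y) ∧ a * b⁻¹ ≠ 1 := by
  rw [cayleyGraph, SimpleGraph.fromRel_adj] at hadj
  obtain ⟨hne, hc⟩ := hadj
  have hne1 : a * b⁻¹ ≠ 1 := fun hcon => hne (mul_inv_eq_one.mp hcon)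
  refine ⟨?_, hne1⟩
  rcases hc with ⟨hm, -⟩ | ⟨hm, -⟩
  · have heq : (b * a⁻¹)⁻¹ = a * b⁻¹ := by group
    rcases hm with hm | hm
    · exact Or.inl (heq ▸ X.inv_mem hm)
    · exact Or.inr (heq ▸ Y.inv_mem hm)
  · exact hm.imp id id

/-- Let `H` be an `n`-dimensional mixed dihedral group relative to `X` and
`Y`, and `Γ = Cay(H, (X ∪ Y) \ {1})`. Then for every triangle `{g, h, k}` of `Γ`, either
all three of `gh⁻¹, hk⁻¹, gk⁻¹` lie in `X`, or all three lie in `Y`. -/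
theorem statement13 {H : Type*} [Group H] [Finite H] (n : ℕ) (hn : 2 ≤ n)
    (X Y : Subgroup H)
    (hX : Nonempty (X ≃* (Fin n → Multiplicative (ZMod 2))))
    (hY : Nonempty (Y ≃* (Fin n → Multiplicative (ZMod 2))))
    (hgen : Subgroup.closure ((X : Set H) ∪ (Y : Set H)) = ⊤)
    (hab : Nonempty ((H ⧸ commutator H) ≃* (Fin (2 * n) → Multiplicative (ZMod 2))))
    (g h k : H)
    (hgh : (cayleyGraph (((X : Set H) ∪ (Y : Set H)) \ {1})).Adj g h)
    (hhk : (cayleyGraph (((X : Set H) ∪ (Y : Set H)) \ {1})).Adj h k)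
    (hgk : (cayleyGraph (((X : Set H) ∪ (Y : Set H)) \ {1})).Adj g k) :
    (g * h⁻¹ ∈ X ∧ h * k⁻¹ ∈ X ∧ g * k⁻¹ ∈ X) ∨
    (g * h⁻¹ ∈ Y ∧ h * k⁻¹ ∈ Y ∧ g * k⁻¹ ∈ Y) := by
  have htriv := statement13_aux_trivial_inter n X Y hX hY hgen hab
  obtain ⟨haU, hane⟩ := statement13_aux_adj X Y g h hgh
  obtain ⟨hbU, hbne⟩ := statement13_aux_adj X Y h k hhk
  obtain ⟨hcU, -⟩ := statement13_aux_adj X Y g k hgk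
  have hceq : g * k⁻¹ = (g * h⁻¹) * (h * k⁻¹) := by group
  have hbeq : h * k⁻¹ = (g * h⁻¹)⁻¹ * (g * k⁻¹) := by group
  have haeq : g * h⁻¹ = (g * k⁻¹) * (h * k⁻¹)⁻¹ := by group
  rcases haU with haX | haY <;> rcases hbU with hbX | hbY
  · exact Or.inl ⟨haX, hbX, hceq ▸ X.mul_mem haX hbX⟩
  · rcases hcU with hcX | hcY
    · exact absurd (htriv _ (hbeq ▸ X.mul_mem (X.inv_mem haX) hcX) hbY) hbne
    · exact absurd (htriv _ haX (haeq ▸ Y.mul_mem hcY (Y.inv_mem hbY))) hane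
  · rcases hcU with hcX | hcY
    · exact absurd (htriv _ (haeq ▸ X.mul_mem hcX (X.inv_mem hbX)) haY) hane
    · exact absurd (htriv _ hbX (hbeq ▸ Y.mul_mem (Y.inv_mem haY) hcY)) hbne
  · exact Or.inr ⟨haY, hbY, hceq ▸ Y.mul_mem haY hbY⟩
end

section
/- Let H be an n-dimensional mixed dihedral group relative to X and Y, and Γ = Cay(H, (X ∪ Y) \ {1}). Then each right coset Xg is a maximal clique of Γ, each right coset Yg is a maximal clique of Γ, and every X-edge {g, xg} (x ∈ X \ {1}) lies in the unique maximal clique Xg, while every Y-edge {g, yg} lies in the unique maximal clique Yg. -/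
section Aux
variable {H : Type*} [Group H] (X Y : Subgroup H)

lemma aux_adj {a b : H}
    (h : (cayleyGraph (((X : Set H) ∪ (Y : Set H)) \ {1})).Adj a b) :
    b * a⁻¹ ∈ (((X : Set H) ∪ (Y : Set H)) \ {1}) := by
  obtain ⟨hne, h | h⟩ := h
  · exact h
  · obtain ⟨hm, h1⟩ := h
    refine ⟨?_, ?_⟩
    · have : (a * b⁻¹)⁻¹ = b * a⁻¹ := by group
      rcases hm with hm | hm
      · exact Or.inl (this ▸ (X.inv_mem hm))
      · exact Or.inr (this ▸ (Y.inv_mem hm))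
    · simp only [Set.mem_singleton_iff] at h1 ⊢
      intro hc
      apply h1
      have : b = a := by
        have := mul_eq_one_iff_eq_inv.mp hc
        rw [this]; group
      simp [this]

lemma aux_clique (g : H) :
    (cayleyGraph (((X : Set H) ∪ (Y : Set H)) \ {1})).IsClique (rcoset X g) := by
  intro p hp q hq hne
  refine ⟨hne, Or.inl ⟨Or.inl ?_, ?_⟩⟩
  · have : q * p⁻¹ = (q * g⁻¹) * (p * g⁻¹)⁻¹ := by group
    rw [this]
    exact X.mul_mem hq (X.inv_mem hp)
  · simp only [Set.mem_singleton_iff]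
    intro hc
    exact hne.symm (by rw [mul_eq_one_iff_eq_inv.mp hc]; group)

lemma aux_key (hXY : X ⊓ Y = ⊥) (g x : H) (hx : x ∈ X) (hx1 : x ≠ 1)
    (C : Set H)
    (hC : (cayleyGraph (((X : Set H) ∪ (Y : Set H)) \ {1})).IsClique C)
    (hsub : ({g, x * g} : Set H) ⊆ C) : C ⊆ rcoset X g := by
  have hg : g ∈ C := hsub (by simp)
  have hxg : x * g ∈ C := hsub (by simp)
  intro c hc
  by_cases h1 : c = g
  · simp [rcoset, h1, X.one_mem]
  by_cases h2 : c = x * g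
  · simpa [rcoset, h2, mul_assoc] using hx
  have ha := aux_adj X Y (hC hg hc (fun h => h1 h.symm))
  obtain ⟨haXY, ha1⟩ := ha
  simp only [Set.mem_singleton_iff] at ha1
  rcases haXY with hax | hay
  · exact hax
  · exfalso
    have hb := aux_adj X Y (hC hxg hc (fun h => h2 h.symm))
    obtain ⟨hbXY, hb1⟩ := hb
    rcases hbXY with hbx | hby
    · apply ha1
      have hmem : c * g⁻¹ ∈ X ⊓ Y := by
        refine ⟨?_, hay⟩
        have : c * g⁻¹ = (c * (x * g)⁻¹) * x := by group
        rw [this]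
        exact X.mul_mem hbx hx
      rw [hXY] at hmem
      exact hmem
    · apply hx1
      have hmem : x ∈ X ⊓ Y := by
        refine ⟨hx, ?_⟩
        have : x = ((c * (x * g)⁻¹)⁻¹ * (c * g⁻¹) : H) := by group
        rw [this]
        exact Y.mul_mem (Y.inv_mem hby) hay
      rw [hXY] at hmem
      exact hmem

lemma aux_self_mem (g : H) : g ∈ rcoset X g := by simp [rcoset, X.one_mem]

lemma aux_mul_mem {x : H} (hx : x ∈ X) (g : H) : x * g ∈ rcoset X g := by
  simpa [rcoset, mul_assoc] using hx

end Aux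

lemma aux_triv {H : Type*} [Group H] [Finite H] (n : ℕ) (X Y : Subgroup H)
    (hX : Nonempty (X ≃* (Fin n → Multiplicative (ZMod 2))))
    (hY : Nonempty (Y ≃* (Fin n → Multiplicative (ZMod 2))))
    (hgen : Subgroup.closure ((X : Set H) ∪ (Y : Set H)) = ⊤)
    (hab : Nonempty ((H ⧸ commutator H) ≃* (Fin (2 * n) → Multiplicative (ZMod 2)))) :
    X ⊓ Y = ⊥ := by
  obtain ⟨eX⟩ := hX; obtain ⟨eY⟩ := hY; obtain ⟨eA'⟩ := hab
  have eA : Abelianization H ≃* (Fin (2 * n) → Multiplicative (ZMod 2)) := eA'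
  have hofs : Function.Surjective (Abelianization.of : H →* Abelianization H) :=
    fun a => QuotientGroup.mk_surjective a
  set ψ : X × Y →* Abelianization H :=
    ((Abelianization.of.comp X.subtype).comp (MonoidHom.fst X Y)) *
    ((Abelianization.of.comp Y.subtype).comp (MonoidHom.snd X Y)) with hψdef
  have hψ : ∀ p : X × Y, ψ p = Abelianization.of (p.1 : H) * Abelianization.of (p.2 : H) :=
    fun p => rfl
  have hsurj : Function.Surjective ψ := by
    rw [← MonoidHom.range_eq_top, eq_top_iff]
    have hsup : X ⊔ Y = (⊤ : Subgroup H) := by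
      rw [← hgen, Subgroup.closure_union, Subgroup.closure_eq, Subgroup.closure_eq]
    have hmap : Subgroup.map Abelianization.of X ⊔ Subgroup.map Abelianization.of Y
        = (⊤ : Subgroup (Abelianization H)) := by
      rw [← Subgroup.map_sup, hsup, Subgroup.map_top_of_surjective _ hofs]
    rw [← hmap]
    refine sup_le ?_ ?_
    · rintro _ ⟨x, hx, rfl⟩
      exact ⟨(⟨x, hx⟩, 1), by rw [hψ]; simp⟩
    · rintro _ ⟨y, hy, rfl⟩
      exact ⟨((1 : X), ⟨y, hy⟩), by rw [hψ]; simp⟩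
  have e : (X × Y) ≃ Abelianization H :=
    (eX.toEquiv.prodCongr eY.toEquiv).trans
      ((Equiv.sumArrowEquivProdArrow (Fin n) (Fin n) (Multiplicative (ZMod 2))).symm.trans
        ((Equiv.arrowCongr (finSumFinEquiv.trans (finCongr (two_mul n).symm))
          (Equiv.refl (Multiplicative (ZMod 2)))).trans eA.toEquiv.symm))
  have hinj : Function.Injective ψ := hsurj.injective_of_finite e
  rw [eq_bot_iff]
  rintro h ⟨hhX, hhY⟩
  have heq : ψ (⟨h, hhX⟩, 1) = ψ ((1 : X), ⟨h, hhY⟩) := by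
    rw [hψ, hψ]; simp
  have h2 := hinj heq
  have h3 : ((⟨h, hhX⟩ : X) : H) = ((1 : X) : H) := congrArg (fun p => ((p.1 : X) : H)) h2
  simpa using h3


/-- Let `H` be an `n`-dimensional mixed dihedral group relative to `X` and
`Y`, and `Γ = Cay(H, (X ∪ Y) \ {1})`. Then each right coset `Xg` is a maximal clique of
`Γ`, each right coset `Yg` is a maximal clique of `Γ`, and every `X`-edge `{g, xg}` lies
in the unique maximal clique `Xg` (every clique containing `{g, xg}` is contained in
`Xg`), while every `Y`-edge `{g, yg}` lies in the unique maximal clique `Yg`. -/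
theorem statement14 {H : Type*} [Group H] [Finite H] (n : ℕ) (hn : 2 ≤ n)
    (X Y : Subgroup H)
    (hX : Nonempty (X ≃* (Fin n → Multiplicative (ZMod 2))))
    (hY : Nonempty (Y ≃* (Fin n → Multiplicative (ZMod 2))))
    (hgen : Subgroup.closure ((X : Set H) ∪ (Y : Set H)) = ⊤)
    (hab : Nonempty ((H ⧸ commutator H) ≃* (Fin (2 * n) → Multiplicative (ZMod 2)))) :
    (∀ g : H,
      (cayleyGraph (((X : Set H) ∪ (Y : Set H)) \ {1})).IsClique (rcoset X g) ∧
      (∀ C : Set H, (cayleyGraph (((X : Set H) ∪ (Y : Set H)) \ {1})).IsClique C →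
        rcoset X g ⊆ C → C = rcoset X g)) ∧
    (∀ g : H,
      (cayleyGraph (((X : Set H) ∪ (Y : Set H)) \ {1})).IsClique (rcoset Y g) ∧
      (∀ C : Set H, (cayleyGraph (((X : Set H) ∪ (Y : Set H)) \ {1})).IsClique C →
        rcoset Y g ⊆ C → C = rcoset Y g)) ∧
    (∀ g : H, ∀ x ∈ X, x ≠ 1 →
      ∀ C : Set H, (cayleyGraph (((X : Set H) ∪ (Y : Set H)) \ {1})).IsClique C →
        ({g, x * g} : Set H) ⊆ C → C ⊆ rcoset X g) ∧
    (∀ g : H, ∀ y ∈ Y, y ≠ 1 →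
      ∀ C : Set H, (cayleyGraph (((X : Set H) ∪ (Y : Set H)) \ {1})).IsClique C →
        ({g, y * g} : Set H) ⊆ C → C ⊆ rcoset Y g) := by
  have hXY : X ⊓ Y = ⊥ := aux_triv n X Y hX hY hgen hab
  have hYX : Y ⊓ X = ⊥ := by rw [inf_comm]; exact hXY
  have hgraph : cayleyGraph (((Y : Set H) ∪ (X : Set H)) \ {1})
      = cayleyGraph (((X : Set H) ∪ (Y : Set H)) \ {1}) := by
    rw [Set.union_comm]
  haveI : NeZero n := ⟨by omega⟩
  obtain ⟨m, hm⟩ := exists_ne (1 : Fin n → Multiplicative (ZMod 2))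
  have hnt : ∀ (Z : Subgroup H), (Z ≃* (Fin n → Multiplicative (ZMod 2))) →
      ∃ z : H, z ∈ Z ∧ z ≠ 1 := by
    intro Z eZ
    refine ⟨(eZ.symm m : Z), (eZ.symm m).2, fun hc => hm ?_⟩
    have h1 : eZ.symm m = (1 : Z) := Subtype.ext (by simpa using hc)
    calc m = eZ (eZ.symm m) := (eZ.apply_symm_apply m).symm
    _ = eZ 1 := by rw [h1]
    _ = 1 := map_one eZ
  obtain ⟨eX⟩ := hX; obtain ⟨eY⟩ := hY
  obtain ⟨x0, hx0, hx01⟩ := hnt X eX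
  obtain ⟨y0, hy0, hy01⟩ := hnt Y eY
  refine ⟨?_, ?_, ?_, ?_⟩
  · intro g
    refine ⟨aux_clique X Y g, fun C hC hsub => ?_⟩
    refine Set.Subset.antisymm ?_ hsub
    refine aux_key X Y hXY g x0 hx0 hx01 C hC ?_
    intro p hp
    rcases hp with hp | hp
    · exact hsub (hp ▸ aux_self_mem X g)
    · exact hsub (hp ▸ aux_mul_mem X hx0 g)
  · intro g
    have hcl := aux_clique Y X g
    rw [hgraph] at hcl
    refine ⟨hcl, fun C hC hsub => ?_⟩
    rw [← hgraph] at hC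
    refine Set.Subset.antisymm ?_ hsub
    refine aux_key Y X hYX g y0 hy0 hy01 C hC ?_
    intro p hp
    rcases hp with hp | hp
    · exact hsub (hp ▸ aux_self_mem Y g)
    · exact hsub (hp ▸ aux_mul_mem Y hy0 g)
  · intro g x hx hx1 C hC hsub
    exact aux_key X Y hXY g x hx hx1 C hC hsub
  · intro g y hy hy1 C hC hsub
    rw [← hgraph] at hC
    exact aux_key Y X hYX g y hy hy1 C hC hsub
end
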